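/- For every real R > 0 and every integer m ≥ 1, the sum over all tuples (k_1, …, k_m) of nonnegative integers with k_1 + 2k_2 + ⋯ + m·k_m = m of R^{k_1+⋯+k_m}·(k_1+⋯+k_m)!/(k_1!⋯k_m!) is at most R·(R+1)^{m−1}. -/

import Mathlib

open Finset PowerSeries

lemma countl (m j : ℕ) (hj : 1 ≤ j) (hjm : j ≤ m) :
    ∑ k ∈ (Finset.piAntidiag (Finset.univ : Finset (Fin m)) j).filter
        (fun k => ∑ i : Fin m, (i.1 + 1) * k i = m),
      ((Nat.multinomial Finset.univ k : ℕ) : ℝ) = ((m - 1).choose (j - 1) : ℝ) := by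
  set T : ℝ⟦X⟧ := ∑ i : Fin m, (X : ℝ⟦X⟧) ^ i.1 with hT
  set S : ℝ⟦X⟧ := ∑ i : Fin m, (X : ℝ⟦X⟧) ^ (i.1 + 1) with hS
  have hST : S = X * T := by
    rw [hS, hT, Finset.mul_sum]
    exact Finset.sum_congr rfl fun i _ => by ring
  -- first: coeff m (S^j) = the combinatorial sum
  have h1 : (coeff (R := ℝ) m) (S ^ j)
      = ∑ k ∈ (Finset.piAntidiag (Finset.univ : Finset (Fin m)) j).filter
        (fun k => ∑ i : Fin m, (i.1 + 1) * k i = m),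
        ((Nat.multinomial Finset.univ k : ℕ) : ℝ) := by
    rw [hS, Finset.sum_pow_eq_sum_piAntidiag]
    rw [map_sum]
    rw [Finset.sum_filter]
    refine Finset.sum_congr rfl fun k _ => ?_
    have : ∏ i : Fin m, ((X : ℝ⟦X⟧) ^ (i.1 + 1)) ^ k i
        = (X : ℝ⟦X⟧) ^ (∑ i : Fin m, (i.1 + 1) * k i) := by
      rw [← Finset.prod_pow_eq_pow_sum]
      exact Finset.prod_congr rfl fun i _ => by rw [← pow_mul]
    rw [this, ← map_natCast (PowerSeries.C (R := ℝ)) (Nat.multinomial Finset.univ k),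
      coeff_C_mul, coeff_X_pow]
    by_cases h : ∑ i : Fin m, (i.1 + 1) * k i = m
    · simp [h]
    · simp [h, Ne.symm h]
  -- second: coeff m (S^j) = choose (m-1) (j-1)
  have hmj : m = (m - j) + j := by omega
  have h2 : (coeff (R := ℝ) m) (S ^ j) = ((m - 1).choose (j - 1) : ℝ) := by
    rw [hST, mul_pow, hmj, coeff_X_pow_mul]
    -- T ^ j = invOneSubPow.val * (1 - X^m)^j
    have hgeo : (1 - (X : ℝ⟦X⟧)) * T = 1 - X ^ m := by
      rw [hT, Finset.mul_sum]
      have : ∀ i : Fin m, (1 - (X : ℝ⟦X⟧)) * X ^ i.1 = X ^ i.1 - X ^ (i.1 + 1) := by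
        intro i; ring
      rw [Finset.sum_congr rfl fun i _ => this i,
        Fin.sum_univ_eq_sum_range (fun i => (X : ℝ⟦X⟧) ^ i - X ^ (i + 1)) m]
      simpa using Finset.sum_range_sub' (fun i => (X : ℝ⟦X⟧) ^ i) m
    have hTj : T ^ j = (invOneSubPow ℝ j).val * (1 - X ^ m) ^ j := by
      have h3 : ((invOneSubPow ℝ j).inv) * T ^ j = (1 - X ^ m) ^ j := by
        rw [invOneSubPow_inv_eq_one_sub_pow, ← mul_pow, hgeo]
      calc T ^ j = ((invOneSubPow ℝ j).val * (invOneSubPow ℝ j).inv) * T ^ j := by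
            rw [(invOneSubPow ℝ j).val_inv, one_mul]
        _ = (invOneSubPow ℝ j).val * ((invOneSubPow ℝ j).inv * T ^ j) := by ring
        _ = _ := by rw [h3]
    rw [hTj]
    have hdvd : (X : ℝ⟦X⟧) ^ m ∣ (invOneSubPow ℝ j).val * (1 - X ^ m) ^ j
        - (invOneSubPow ℝ j).val := by
      have : (X : ℝ⟦X⟧) ^ m ∣ 1 - (1 - X ^ m) ^ j := by
        have h4 := sub_dvd_pow_sub_pow (1 : ℝ⟦X⟧) (1 - X ^ m) j
        rw [show (1 : ℝ⟦X⟧) - (1 - X ^ m) = X ^ m by ring, one_pow] at h4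
        exact h4
      obtain ⟨q, hq⟩ := this
      exact ⟨-((invOneSubPow ℝ j).val * q), by
        linear_combination (-(invOneSubPow ℝ j).val) * hq⟩
    have hco : (coeff (R := ℝ) (m - j)) ((invOneSubPow ℝ j).val * (1 - X ^ m) ^ j
        - (invOneSubPow ℝ j).val) = 0 := by
      rw [PowerSeries.X_pow_dvd_iff] at hdvd
      exact hdvd _ (by omega)
    have : (coeff (R := ℝ) (m - j)) ((invOneSubPow ℝ j).val * (1 - X ^ m) ^ j)
        = (coeff (R := ℝ) (m - j)) ((invOneSubPow ℝ j).val) := by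
      have := congrArg (fun z => z + (coeff (R := ℝ) (m - j)) ((invOneSubPow ℝ j).val)) hco
      simpa [map_sub, sub_add_cancel] using this
    rw [this, invOneSubPow_val_eq_mk_sub_one_add_choose_of_pos ℝ j hj, coeff_mk]
    congr 2
    omega
  rw [← h1, h2]

theorem stmt5 (R : ℝ) (hR : 0 < R) (m : ℕ) (hm : 1 ≤ m) :
    ∑ k ∈ (Fintype.piFinset fun _ : Fin m => Finset.range (m + 1)).filter
        (fun k => ∑ i : Fin m, (i.1 + 1) * k i = m),
      R ^ (∑ i : Fin m, k i) * ((∑ i : Fin m, k i).factorial : ℝ) /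
        ∏ i : Fin m, ((k i).factorial : ℝ)
      ≤ R * (R + 1) ^ (m - 1) := by
  set A := (Fintype.piFinset fun _ : Fin m => Finset.range (m + 1)).filter
      (fun k => ∑ i : Fin m, (i.1 + 1) * k i = m) with hA
  have hAmem : ∀ k, k ∈ A ↔ (∑ i : Fin m, (i.1 + 1) * k i = m) := by
    intro k
    rw [hA, Finset.mem_filter, Fintype.mem_piFinset]
    constructor
    · exact fun h => h.2
    · intro h
      refine ⟨fun i => Finset.mem_range.2 ?_, h⟩
      have h1 : (i.1 + 1) * k i ≤ m :=
        le_trans (Finset.single_le_sum (f := fun i : Fin m => (i.1 + 1) * k i)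
          (fun _ _ => Nat.zero_le _) (Finset.mem_univ i)) (le_of_eq h)
      have : k i ≤ (i.1 + 1) * k i := Nat.le_mul_of_pos_left _ (Nat.succ_pos _)
      omega
  have hmap : ∀ k ∈ A, (∑ i : Fin m, k i) ∈ Finset.range (m + 1) := by
    intro k hk
    rw [hAmem] at hk
    refine Finset.mem_range.2 ?_
    have : ∑ i : Fin m, k i ≤ ∑ i : Fin m, (i.1 + 1) * k i :=
      Finset.sum_le_sum fun i _ => Nat.le_mul_of_pos_left _ (Nat.succ_pos _)
    omega
  rw [← Finset.sum_fiberwise_of_maps_to hmap]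
  have key : ∀ j ∈ Finset.range (m + 1),
      ∑ k ∈ A.filter (fun k => ∑ i : Fin m, k i = j),
        (R ^ (∑ i : Fin m, k i) * ((∑ i : Fin m, k i).factorial : ℝ) /
          ∏ i : Fin m, ((k i).factorial : ℝ))
      = if j = 0 then 0 else R ^ j * ((m - 1).choose (j - 1) : ℝ) := by
    intro j hj
    rw [Finset.mem_range] at hj
    by_cases hj0 : j = 0
    · subst hj0
      rw [Finset.sum_eq_zero]
      · simp
      intro k hk
      rw [Finset.mem_filter] at hk
      have h1 := (hAmem k).1 hk.1
      have h2 := hk.2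
      exfalso
      have : ∀ i : Fin m, k i = 0 := by
        intro i
        have := Finset.sum_eq_zero_iff.1 h2 i (Finset.mem_univ i)
        exact this
      rw [Finset.sum_eq_zero (fun i _ => by rw [this i, Nat.mul_zero])] at h1
      omega
    · simp only [hj0, if_false]
      have hterm : ∀ k ∈ A.filter (fun k => ∑ i : Fin m, k i = j),
          R ^ (∑ i : Fin m, k i) * ((∑ i : Fin m, k i).factorial : ℝ) /
            ∏ i : Fin m, ((k i).factorial : ℝ)
          = R ^ j * ((Nat.multinomial Finset.univ k : ℕ) : ℝ) := by
        intro k hk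
        have hsum : ∑ i : Fin m, k i = j := (Finset.mem_filter.1 hk).2
        have hspec := Nat.multinomial_spec (Finset.univ : Finset (Fin m)) k
        have hprodne : (∏ i : Fin m, ((k i).factorial : ℝ)) ≠ 0 :=
          Finset.prod_ne_zero_iff.2 fun i _ => Nat.cast_ne_zero.2 (Nat.factorial_ne_zero _)
        have hcast : ((∑ i : Fin m, k i).factorial : ℝ)
            = (∏ i : Fin m, ((k i).factorial : ℝ)) * (Nat.multinomial Finset.univ k : ℝ) := by
          rw [← hspec]; push_cast; ring
        rw [hsum] at hcast ⊢
        rw [hcast]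
        field_simp
      rw [Finset.sum_congr rfl hterm, ← Finset.mul_sum]
      have hsetseq : A.filter (fun k => ∑ i : Fin m, k i = j)
          = (Finset.piAntidiag (Finset.univ : Finset (Fin m)) j).filter
              (fun k => ∑ i : Fin m, (i.1 + 1) * k i = m) := by
        ext k
        constructor
        · intro hk
          have h2 := (Finset.mem_filter.1 hk).2
          have h1 := (hAmem k).1 (Finset.mem_filter.1 hk).1
          exact Finset.mem_filter.2 ⟨Finset.mem_piAntidiag.2
            ⟨h2, fun i _ => Finset.mem_univ i⟩, h1⟩
        · intro hk
          have h1 := (Finset.mem_filter.1 hk).2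
          have h2 := (Finset.mem_piAntidiag.1 (Finset.mem_filter.1 hk).1).1
          exact Finset.mem_filter.2 ⟨(hAmem k).2 h1, h2⟩
      rw [hsetseq, countl m j (by omega) (by omega)]
  rw [Finset.sum_congr rfl key]
  rw [Finset.sum_range_succ']
  simp only [if_neg (Nat.succ_ne_zero _), if_pos rfl, add_zero, Nat.add_sub_cancel]
  have : ∀ i, R ^ (i + 1) * ((m - 1).choose i : ℝ) = R * (R ^ i * ((m - 1).choose i : ℝ)) := by
    intro i; ring
  rw [Finset.sum_congr rfl fun i _ => this i, ← Finset.mul_sum]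
  have hbin : (R + 1) ^ (m - 1) = ∑ i ∈ Finset.range m, R ^ i * ((m - 1).choose i : ℝ) := by
    rw [add_pow]
    have hm1 : m - 1 + 1 = m := by omega
    rw [hm1]
    exact Finset.sum_congr rfl fun i _ => by rw [one_pow, mul_one]
  rw [hbin]
  simp
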